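/- Suppose X has a Lebesgue density f_X supported on [0,1]. Then for every s ∈ [−1,1], P(Z ≤ s) = (1/√2) ∫₀^{(1+s)/2} √((1+s−2x)/(1−x)) · f_X(x) dx. -/

import Mathlib

open MeasureTheory
open scoped ENNReal

lemma slice_measure (s x : ℝ) (hs1 : s ≤ 1) (hx1 : x < 1) :
    ((2 : ℝ≥0∞)⁻¹ • volume.restrict (Set.Icc (-1 : ℝ) 1))
      {t : ℝ | t ^ 2 + (1 - t ^ 2) * (2 * x - 1) ≤ s}
      = ENNReal.ofReal (1 / Real.sqrt 2 * Real.sqrt ((1 + s - 2 * x) / (1 - x))) := by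
  have hx1' : (0:ℝ) < 1 - x := by linarith
  set c : ℝ := (1 + s - 2 * x) / (2 * (1 - x)) with hc
  have hset : {t : ℝ | t ^ 2 + (1 - t ^ 2) * (2 * x - 1) ≤ s}
      = {t : ℝ | t ^ 2 ≤ c} := by
    ext t
    simp only [Set.mem_setOf_eq, hc]
    rw [le_div_iff₀ (by linarith)]
    constructor <;> intro h <;> nlinarith
  rw [hset]
  by_cases hcs : 0 ≤ 1 + s - 2 * x
  · have hc0 : 0 ≤ c := div_nonneg hcs (by linarith)
    have hc1 : c ≤ 1 := by
      rw [div_le_one (by linarith)]; linarith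
    have hsc : Real.sqrt c ≤ 1 := by
      rw [show (1:ℝ) = Real.sqrt 1 by simp]
      exact Real.sqrt_le_sqrt hc1
    have hset2 : {t : ℝ | t ^ 2 ≤ c} = Set.Icc (-Real.sqrt c) (Real.sqrt c) := by
      ext t
      simp only [Set.mem_setOf_eq, Set.mem_Icc, ← abs_le]
      rw [← sq_abs t, ← Real.le_sqrt (abs_nonneg t) hc0]
    rw [hset2, Measure.smul_apply, Measure.restrict_apply measurableSet_Icc,
      Set.inter_eq_left.mpr (Set.Icc_subset_Icc (by linarith) hsc),
      Real.volume_Icc, smul_eq_mul]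
    have h2 : Real.sqrt c - -Real.sqrt c = 2 * Real.sqrt c := by ring
    rw [h2, ENNReal.ofReal_mul (by norm_num), ENNReal.ofReal_ofNat, ← mul_assoc,
      ENNReal.inv_mul_cancel two_ne_zero ENNReal.ofNat_ne_top, one_mul]
    congr 1
    have hceq : c = ((1 + s - 2 * x) / (1 - x)) / 2 := by
      rw [hc, div_div]; ring_nf
    rw [hceq, Real.sqrt_div (div_nonneg hcs hx1'.le) 2]
    ring
  · have hempty : {t : ℝ | t ^ 2 ≤ c} = ∅ := by
      ext t
      simp only [Set.mem_setOf_eq, Set.mem_empty_iff_false, iff_false, not_le]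
      have : c < 0 := div_neg_of_neg_of_pos (by linarith) (by linarith)
      nlinarith [sq_nonneg t]
    have hz : Real.sqrt ((1 + s - 2 * x) / (1 - x)) = 0 := by
      apply Real.sqrt_eq_zero'.mpr
      exact le_of_lt (div_neg_of_neg_of_pos (by linarith) hx1')
    rw [hempty, hz]
    simp

theorem cdf_of_Z
    {Ω : Type*} [MeasurableSpace Ω] (P : Measure Ω) [IsProbabilityMeasure P]
    (X T : Ω → ℝ) (hX : Measurable X) (hT : Measurable T)
    (hX_range : ∀ ω, X ω ∈ Set.Icc (0 : ℝ) 1)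
    (hT_unif : Measure.map T P = (2 : ℝ≥0∞)⁻¹ • volume.restrict (Set.Icc (-1 : ℝ) 1))
    (hindep : ProbabilityTheory.IndepFun X T P)
    (fX : ℝ → ℝ) (hfX_meas : Measurable fX) (hfX_nonneg : ∀ x, 0 ≤ fX x)
    (hfX_supp : ∀ x, x ∉ Set.Icc (0 : ℝ) 1 → fX x = 0)
    (hX_law : Measure.map X P = volume.withDensity fun x => ENNReal.ofReal (fX x))
    (s : ℝ) (hs : s ∈ Set.Icc (-1 : ℝ) 1) :
    (P {ω | T ω ^ 2 + (1 - T ω ^ 2) * (2 * X ω - 1) ≤ s}).toReal =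
      (1 / Real.sqrt 2) *
        ∫ x in (0 : ℝ)..((1 + s) / 2), Real.sqrt ((1 + s - 2 * x) / (1 - x)) * fX x := by
  obtain ⟨hsl, hsu⟩ := hs
  set u : ℝ := (1 + s) / 2 with hu
  have hu0 : (0:ℝ) ≤ u := by rw [hu]; linarith
  set F : ℝ → ℝ := fun x => Real.sqrt ((1 + s - 2 * x) / (1 - x)) with hF
  set ν : Measure ℝ := (2 : ℝ≥0∞)⁻¹ • volume.restrict (Set.Icc (-1 : ℝ) 1) with hν
  set μX : Measure ℝ := volume.withDensity fun x => ENNReal.ofReal (fX x) with hμX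
  have hFmeas : Measurable F := by
    exact Real.continuous_sqrt.measurable.comp
      (((measurable_const.sub (measurable_id.const_mul 2)).div
        (measurable_const.sub measurable_id)))
  have hSmeas : MeasurableSet {p : ℝ × ℝ | p.2 ^ 2 + (1 - p.2 ^ 2) * (2 * p.1 - 1) ≤ s} := by
    apply measurableSet_le _ measurable_const
    apply Measurable.add
    · exact (measurable_snd.pow_const 2)
    · exact (measurable_const.sub (measurable_snd.pow_const 2)).mul
        ((measurable_fst.const_mul 2).sub measurable_const)
  have hmap : Measure.map (fun ω => (X ω, T ω)) P = μX.prod ν := by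
    rw [← hX_law, ← hT_unif]
    exact (ProbabilityTheory.indepFun_iff_map_prod_eq_prod_map_map
      hX.aemeasurable hT.aemeasurable).mp hindep
  have key : P {ω | T ω ^ 2 + (1 - T ω ^ 2) * (2 * X ω - 1) ≤ s}
      = ∫⁻ x, ν {t : ℝ | t ^ 2 + (1 - t ^ 2) * (2 * x - 1) ≤ s} ∂μX := by
    have := Measure.map_apply (hX.prodMk hT) hSmeas (μ := P)
    rw [hmap] at this
    rw [show {ω | T ω ^ 2 + (1 - T ω ^ 2) * (2 * X ω - 1) ≤ s}
        = (fun ω => (X ω, T ω)) ⁻¹' {p : ℝ × ℝ | p.2 ^ 2 + (1 - p.2 ^ 2) * (2 * p.1 - 1) ≤ s}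
        from rfl, ← this, Measure.prod_apply hSmeas]
    rfl
  -- a.e. x < 1 with respect to μX
  have hae_lt : ∀ᵐ x ∂μX, x < 1 := by
    have h1 : μX (Set.Ioi 1) = 0 := by
      rw [hμX, withDensity_apply _ measurableSet_Ioi]
      rw [show (∫⁻ x in Set.Ioi (1:ℝ), ENNReal.ofReal (fX x)) = ∫⁻ _ in Set.Ioi (1:ℝ), 0 from
        setLIntegral_congr_fun measurableSet_Ioi (fun x hx => by
          rw [hfX_supp x (by simp [Set.mem_Icc]; intro h; linarith [Set.mem_Ioi.mp hx])]
          simp)]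
      simp
    have h2 : μX {(1:ℝ)} = 0 :=
      (withDensity_absolutelyContinuous _ _) (by simp)
    have : μX {x : ℝ | ¬ x < 1} = 0 := by
      have hsub : {x : ℝ | ¬ x < 1} ⊆ Set.Ioi 1 ∪ {1} := by
        intro x hx
        simp only [Set.mem_setOf_eq, not_lt] at hx
        rcases lt_or_eq_of_le hx with h | h
        · exact Or.inl h
        · exact Or.inr (by simp [h.symm])
      exact measure_mono_null hsub (le_antisymm
        (le_trans (measure_union_le _ _) (by rw [h1, h2]; simp)) zero_le)
    exact this
  have hae : ∀ᵐ x ∂μX, ν {t : ℝ | t ^ 2 + (1 - t ^ 2) * (2 * x - 1) ≤ s}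
      = ENNReal.ofReal (1 / Real.sqrt 2 * F x) := by
    filter_upwards [hae_lt] with x hx
    exact slice_measure s x hsu hx
  rw [key, lintegral_congr_ae hae]
  have hGmeas : Measurable fun x => ENNReal.ofReal (1 / Real.sqrt 2 * F x) :=
    (hFmeas.const_mul _).ennreal_ofReal
  rw [hμX, lintegral_withDensity_eq_lintegral_mul _ hfX_meas.ennreal_ofReal hGmeas]
  have hprod : (fun x => ENNReal.ofReal (fX x) * ENNReal.ofReal (1 / Real.sqrt 2 * F x))
      = fun x => ENNReal.ofReal (1 / Real.sqrt 2 * (F x * fX x)) := by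
    funext x
    rw [← ENNReal.ofReal_mul (hfX_nonneg x)]
    congr 1
    ring
  simp only [Pi.mul_apply]
  rw [hprod]
  have hG_nonneg : ∀ x, 0 ≤ 1 / Real.sqrt 2 * (F x * fX x) := fun x => by
    have := hfX_nonneg x
    have := Real.sqrt_nonneg ((1 + s - 2 * x) / (1 - x))
    positivity
  have hint : ∫ x, 1 / Real.sqrt 2 * (F x * fX x)
      = (∫⁻ x, ENNReal.ofReal (1 / Real.sqrt 2 * (F x * fX x))).toReal := by
    apply integral_eq_lintegral_of_nonneg_ae (Filter.Eventually.of_forall hG_nonneg)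
    exact ((hFmeas.mul hfX_meas).const_mul _).aestronglyMeasurable
  have hvanish : ∀ x ∉ Set.Icc (0:ℝ) u, 1 / Real.sqrt 2 * (F x * fX x) = 0 := by
    intro x hx
    simp only [Set.mem_Icc, not_and_or, not_le] at hx
    rcases hx with h | h
    · rw [hfX_supp x (by simp [Set.mem_Icc]; intro h'; linarith)]
      ring
    · -- u < x
      by_cases h1 : x > 1
      · rw [hfX_supp x (by simp [Set.mem_Icc]; intro h'; linarith)]
        ring
      · push_neg at h1
        have hFz : F x = 0 := by
          rw [hF]
          rcases lt_or_eq_of_le h1 with h2 | h2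
          · apply Real.sqrt_eq_zero'.mpr
            apply le_of_lt
            apply div_neg_of_neg_of_pos
            · rw [hu] at h; linarith
            · linarith
          · rw [h2]
            simp
        rw [hFz]; ring
  calc (∫⁻ x, ENNReal.ofReal (1 / Real.sqrt 2 * (F x * fX x))).toReal
      = ∫ x, 1 / Real.sqrt 2 * (F x * fX x) := hint.symm
    _ = ∫ x in Set.Icc (0:ℝ) u, 1 / Real.sqrt 2 * (F x * fX x) :=
        (setIntegral_eq_integral_of_forall_compl_eq_zero hvanish).symm
    _ = ∫ x in Set.Ioc (0:ℝ) u, 1 / Real.sqrt 2 * (F x * fX x) :=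
        integral_Icc_eq_integral_Ioc
    _ = ∫ x in (0:ℝ)..u, 1 / Real.sqrt 2 * (F x * fX x) :=
        (intervalIntegral.integral_of_le hu0).symm
    _ = 1 / Real.sqrt 2 * ∫ x in (0:ℝ)..u, F x * fX x := by
        rw [intervalIntegral.integral_const_mul]
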